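/- Beta-Bernoulli sensitivity (injectivity of the h-function): for natural numbers define h_{α₋,β₋}(A,B) = A!·B!·(A+B+α₋+β₋+1)! / ((A+α₋)!·(B+β₋)!·(A+B+1)!). If (A,B) and (A',B') are pairs of natural numbers such that h_{α₋',β₋'}(A,B) = h_{α₋',β₋'}(A',B') for all four parameter pairs (α₋',β₋') ∈ {(α₋,β₋),(α₋+1,β₋),(α₋,β₋+1),(α₋+1,β₋+1)} for some fixed natural numbers α₋,β₋, then (A,B) = (A',B'). -/

import Mathlib

open Nat

/-- The Beta–Bernoulli h-function:
h_{α₋,β₋}(A,B) = A!·B!·(A+B+α₋+β₋+1)! / ((A+α₋)!·(B+β₋)!·(A+B+1)!). -/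
noncomputable def hBB (αm βm A B : ℕ) : ℚ :=
  ((A ! : ℚ) * (B ! : ℚ) * ((A + B + αm + βm + 1)! : ℚ))
    / (((A + αm)! : ℚ) * ((B + βm)! : ℚ) * ((A + B + 1)! : ℚ))

lemma hBB_pos (αm βm A B : ℕ) : 0 < hBB αm βm A B := by
  unfold hBB
  apply _root_.div_pos
  · exact mul_pos (mul_pos (by exact_mod_cast A.factorial_pos)
      (by exact_mod_cast B.factorial_pos)) (by exact_mod_cast (A+B+αm+βm+1).factorial_pos)
  · exact mul_pos (mul_pos (by exact_mod_cast (A+αm).factorial_pos)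
      (by exact_mod_cast (B+βm).factorial_pos)) (by exact_mod_cast (A+B+1).factorial_pos)

lemma ratio1 (αm βm A B : ℕ) :
    hBB αm (βm + 1) A B * ((B : ℚ) + βm + 1)
      = hBB αm βm A B * ((A : ℚ) + B + αm + βm + 2) := by
  unfold hBB
  have e1 : (B + (βm + 1))! = (B + βm + 1) * (B + βm)! := by
    rw [show B + (βm + 1) = (B + βm) + 1 by ring]
    exact Nat.factorial_succ _
  have e2 : (A + B + αm + (βm + 1) + 1)! = (A + B + αm + βm + 2) * (A + B + αm + βm + 1)! := by
    rw [show A + B + αm + (βm + 1) + 1 = (A + B + αm + βm + 1) + 1 by ring]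
    exact Nat.factorial_succ _
  rw [e1, e2]
  have n1 : ((A + αm)! : ℚ) ≠ 0 := by exact_mod_cast (A + αm).factorial_ne_zero
  have n2 : ((B + βm)! : ℚ) ≠ 0 := by exact_mod_cast (B + βm).factorial_ne_zero
  have n3 : ((A + B + 1)! : ℚ) ≠ 0 := by exact_mod_cast (A + B + 1).factorial_ne_zero
  have n4 : ((B : ℚ) + βm + 1) ≠ 0 := by positivity
  push_cast
  field_simp

theorem stmt15
    (αm βm A B A' B' : ℕ)
    (h1 : hBB αm βm A B = hBB αm βm A' B')
    (h2 : hBB (αm + 1) βm A B = hBB (αm + 1) βm A' B')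
    (h3 : hBB αm (βm + 1) A B = hBB αm (βm + 1) A' B')
    (h4 : hBB (αm + 1) (βm + 1) A B = hBB (αm + 1) (βm + 1) A' B') :
    A = A' ∧ B = B' := by
  have r1 := ratio1 αm βm A B
  have r1' := ratio1 αm βm A' B'
  rw [h1, h3] at r1
  have hx1 : hBB αm βm A' B' ≠ 0 := ne_of_gt (hBB_pos _ _ _ _)
  have P1 : ((A : ℚ) + B + αm + βm + 2) * ((B' : ℚ) + βm + 1)
      = ((A' : ℚ) + B' + αm + βm + 2) * ((B : ℚ) + βm + 1) := by
    have key : hBB αm βm A' B' * (((A : ℚ) + B + αm + βm + 2) * ((B' : ℚ) + βm + 1))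
        = hBB αm βm A' B' * (((A' : ℚ) + B' + αm + βm + 2) * ((B : ℚ) + βm + 1)) := by
      linear_combination ((B : ℚ) + βm + 1) * r1' - ((B' : ℚ) + βm + 1) * r1
    exact mul_left_cancel₀ hx1 key
  have r2 := ratio1 (αm + 1) βm A B
  have r2' := ratio1 (αm + 1) βm A' B'
  rw [h2, h4] at r2
  push_cast at r2 r2'
  have hx2 : hBB (αm + 1) βm A' B' ≠ 0 := ne_of_gt (hBB_pos _ _ _ _)
  have P2 : ((A : ℚ) + B + αm + βm + 3) * ((B' : ℚ) + βm + 1)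
      = ((A' : ℚ) + B' + αm + βm + 3) * ((B : ℚ) + βm + 1) := by
    have key : hBB (αm + 1) βm A' B' * (((A : ℚ) + B + αm + βm + 3) * ((B' : ℚ) + βm + 1))
        = hBB (αm + 1) βm A' B' * (((A' : ℚ) + B' + αm + βm + 3) * ((B : ℚ) + βm + 1)) := by
      linear_combination ((B : ℚ) + βm + 1) * r2' - ((B' : ℚ) + βm + 1) * r2
    exact mul_left_cancel₀ hx2 key
  have hbq : (B : ℚ) = B' := by linear_combination P1 - P2
  have hb : B = B' := by exact_mod_cast hbq
  have haq : (A : ℚ) = A' := by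
    have hk : ((B : ℚ) + βm + 1) ≠ 0 := by positivity
    have : ((A : ℚ) + B + αm + βm + 2) = ((A' : ℚ) + B' + αm + βm + 2) := by
      apply mul_right_cancel₀ hk
      rw [hbq] at P1 ⊢
      linarith [P1]
    linarith [this, hbq]
  exact ⟨by exact_mod_cast haq, hb⟩
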